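/- Let v be a time-dependent C¹ velocity field on ℝ³ with flow map α, and let ρ : ℝ × ℝ³ → ℝ be C¹ and satisfy the continuity equation ∂_t ρ + v^a ∂_a ρ = −ρ ∂_a v^a everywhere. Then for every bounded open set G the total mass t ↦ ∫_{G_t} ρ(t,x) d³x is constant in t. -/

import Mathlib

open MeasureTheory Real Set Metric
open scoped ENNReal NNReal Topology
noncomputable section

/-- ℝ³ with Cartesian coordinates. -/
abbrev V3 := Fin 3 → ℝ

/-- Partial derivative `∂_i f (x)` of a scalar function on ℝ³. -/
def pd (f : V3 → ℝ) (i : Fin 3) (x : V3) : ℝ := fderiv ℝ f x (Pi.single i 1)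

/-- `α` is a comoving flow map for the time-dependent velocity field `v` with
initial time `t₀`: `α(t₀,·) = id`, each `α(t,·)` is a C¹ diffeomorphism of ℝ³,
and `∂ₜ α(t,x) = v(t, α(t,x))`. -/
def IsFlowMap (v : ℝ → V3 → V3) (t₀ : ℝ) (α : ℝ → V3 → V3) : Prop :=
  (∀ x, α t₀ x = x) ∧
  (∀ t, Function.Bijective (α t) ∧ ContDiff ℝ 1 (α t) ∧
    ContDiff ℝ 1 (Function.invFun (α t))) ∧
  (∀ t x, HasDerivAt (fun s => α s x) (v t (α t x)) t)


/-- Two-point Gronwall comparison, forward in time, assuming both trajectories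
stay in the set `K'` where the field is Lipschitz. -/
lemma gron2 {K' : Set V3} {M : ℝ≥0} {c b : ℝ}
    (w : ℝ → V3 → V3)
    (hw : ∀ s ∈ Set.Icc c b, LipschitzOnWith M (w s) K')
    {f g : ℝ → V3}
    (hfc : ContinuousOn f (Set.Icc c b)) (hgc : ContinuousOn g (Set.Icc c b))
    (hf' : ∀ s ∈ Set.Ico c b, HasDerivWithinAt f (w s (f s)) (Set.Ici s) s)
    (hg' : ∀ s ∈ Set.Ico c b, HasDerivWithinAt g (w s (g s)) (Set.Ici s) s)
    (hfK : ∀ s ∈ Set.Ico c b, f s ∈ K') (hgK : ∀ s ∈ Set.Ico c b, g s ∈ K') :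
    ∀ s ∈ Set.Icc c b, dist (f s) (g s) ≤ dist (f c) (g c) * Real.exp (M * (s - c)) := by
  rcases le_or_gt c b with hcb | hcb
  · set ww : ℝ → V3 → V3 := fun s => w (max c (min s b)) with hww
    have hclamp : ∀ s : ℝ, max c (min s b) ∈ Set.Icc c b := fun s =>
      ⟨le_max_left _ _, max_le hcb (min_le_right _ _)⟩
    have hlip : ∀ t, LipschitzOnWith M (ww t) K' := fun t => hw _ (hclamp t)
    have hid : ∀ s ∈ Set.Ico c b, ww s = w s := by
      intro s hs
      have : max c (min s b) = s := by
        rw [min_eq_left hs.2.le, max_eq_right hs.1]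
      rw [hww]; simp [this]
    intro s hs
    refine dist_le_of_trajectories_ODE_of_mem (v := ww) (s := fun _ => K') (fun t _ => hlip t) hfc
      (fun τ hτ => by rw [hid τ hτ]; exact hf' τ hτ) hfK hgc
      (fun τ hτ => by rw [hid τ hτ]; exact hg' τ hτ) hgK le_rfl s hs
  · intro s hs; exact absurd (hs.1.trans hs.2) (not_le.2 hcb)

/-- Bootstrap: if `g` starts close enough to `f`, it stays in the tube where the
field is Lipschitz, and satisfies the Gronwall estimate on all of `[c, b]`. -/
lemma boot {K' : Set V3} {M : ℝ≥0} {c b : ℝ} (hcb : c ≤ b)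
    (w : ℝ → V3 → V3)
    (hw : ∀ s ∈ Set.Icc c b, LipschitzOnWith M (w s) K')
    {f g : ℝ → V3} (hfc : Continuous f) (hgc : Continuous g)
    (hf' : ∀ s ∈ Set.Icc c b, HasDerivAt f (w s (f s)) s)
    (hg' : ∀ s ∈ Set.Icc c b, HasDerivAt g (w s (g s)) s)
    (hfK : ∀ s ∈ Set.Icc c b, Metric.closedBall (f s) 1 ⊆ K')
    (hsmall : dist (f c) (g c) * Real.exp (M * (b - c)) ≤ 1/2) :
    ∀ s ∈ Set.Icc c b, dist (f s) (g s) ≤ dist (f c) (g c) * Real.exp (M * (s - c)) := by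
  set D := dist (f c) (g c) with hD
  have hD0 : 0 ≤ D := dist_nonneg
  set S : Set ℝ := {s | ∀ τ ∈ Set.Icc c s, dist (f τ) (g τ) ≤ D * Real.exp (M * (τ - c))} with hS
  -- the pointwise bound is at most 1/2 on [c,b]
  have hhalf : ∀ τ ∈ Set.Icc c b, D * Real.exp (M * (τ - c)) ≤ 1/2 := by
    intro τ hτ
    calc D * Real.exp (M * (τ - c)) ≤ D * Real.exp (M * (b - c)) := by
          apply mul_le_mul_of_nonneg_left _ hD0
          exact Real.exp_le_exp.2 (by
            have := hτ.2
            have hM : (0:ℝ) ≤ M := M.coe_nonneg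
            nlinarith)
      _ ≤ 1/2 := hsmall
  -- closedness
  have hclosed : IsClosed (S ∩ Set.Icc c b) := by
    rw [← isSeqClosed_iff_isClosed]
    intro u x hu hx
    have hxI : x ∈ Set.Icc c b :=
      isClosed_Icc.isSeqClosed (fun n => (hu n).2) hx
    refine ⟨?_, hxI⟩
    intro τ hτ
    rcases eq_or_lt_of_le hτ.2 with rfl | hlt
    · -- τ = x : pass to the limit
      have h1 : Filter.Tendsto (fun n => dist (f (u n)) (g (u n))) Filter.atTop
          (𝓝 (dist (f τ) (g τ))) := by
        exact ((hfc.tendsto τ).comp hx).dist ((hgc.tendsto τ).comp hx)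
      have h2 : Filter.Tendsto (fun n => D * Real.exp (M * (u n - c))) Filter.atTop
          (𝓝 (D * Real.exp (M * (τ - c)))) := by
        apply Filter.Tendsto.const_mul
        exact (Real.continuous_exp.tendsto _).comp
          ((continuous_const.mul (continuous_id.sub continuous_const)).continuousAt.tendsto.comp hx)
      exact le_of_tendsto_of_tendsto' h1 h2 (fun n => (hu n).1 (u n) ⟨(hu n).2.1, le_rfl⟩)
    · -- τ < x : eventually u n > τ
      obtain ⟨n, hn⟩ := (hx.eventually (eventually_gt_nhds hlt)).exists
      exact (hu n).1 τ ⟨hτ.1, hn.le⟩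
  -- induction step
  have hstep : ∀ x ∈ S ∩ Set.Ico c b, ∀ y ∈ Set.Ioi x, (S ∩ Set.Ioc x y).Nonempty := by
    intro x hx y hy
    have hxb : x < b := hx.2.2
    have hcx : c ≤ x := hx.2.1
    -- dist at x is ≤ 1/2
    have hdx : dist (f x) (g x) ≤ 1/2 :=
      (hx.1 x ⟨hcx, le_rfl⟩).trans (hhalf x ⟨hcx, hxb.le⟩)
    -- continuity gives a small window to the right where dist < 1
    have hcont : ContinuousAt (fun s => dist (f s) (g s)) x :=
      ((hfc.tendsto x).dist (hgc.tendsto x))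
    have hev : ∀ᶠ s in 𝓝 x, dist (f s) (g s) < 1 :=
      hcont.eventually_lt_const (by linarith)
    obtain ⟨η, hη, hball⟩ := Metric.eventually_nhds_iff_ball.1 hev
    set z := min (min (x + η/2) y) b with hz
    have hxz : x < z := by
      apply lt_min (lt_min (by linarith) hy)
      exact hxb
    have hzb : z ≤ b := min_le_right _ _
    have hzy : z ≤ y := (min_le_left _ _).trans (min_le_right _ _)
    -- memberships on [c,z]
    have hmemf : ∀ τ ∈ Set.Ico c z, f τ ∈ K' := by
      intro τ hτ
      exact hfK τ ⟨hτ.1, hτ.2.le.trans hzb⟩ (Metric.mem_closedBall_self zero_le_one)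
    have hdistz : ∀ τ ∈ Set.Ico c z, dist (f τ) (g τ) ≤ 1 := by
      intro τ hτ
      rcases le_or_gt τ x with h | h
      · exact ((hx.1 τ ⟨hτ.1, h⟩).trans (hhalf τ ⟨hτ.1, h.trans hxb.le⟩)).trans (by norm_num)
      · have : dist τ x < η := by
          rw [Real.dist_eq, abs_of_pos (by linarith)]
          have : τ < z := hτ.2
          have : τ < x + η/2 := lt_of_lt_of_le hτ.2 ((min_le_left _ _).trans (min_le_left _ _))
          linarith
        exact (hball τ this).le
    have hmemg : ∀ τ ∈ Set.Ico c z, g τ ∈ K' := by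
      intro τ hτ
      apply hfK τ ⟨hτ.1, hτ.2.le.trans hzb⟩
      rw [Metric.mem_closedBall, dist_comm]
      exact hdistz τ hτ
    -- apply gron2 on [c,z]
    have hg2 := gron2 (K' := K') (M := M) (c := c) (b := z) w
      (fun s hs => hw s ⟨hs.1, hs.2.trans hzb⟩) hfc.continuousOn hgc.continuousOn
      (fun s hs => ((hf' s ⟨hs.1, hs.2.le.trans hzb⟩)).hasDerivWithinAt)
      (fun s hs => ((hg' s ⟨hs.1, hs.2.le.trans hzb⟩)).hasDerivWithinAt)
      hmemf hmemg
    refine ⟨z, ?_, ⟨hxz, hzy⟩⟩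
    intro τ hτ
    exact hg2 τ hτ
  have hmain : Set.Icc c b ⊆ S := hclosed.Icc_subset_of_forall_exists_gt
    (by intro τ hτ; simpa using le_of_eq (by
        have : τ = c := le_antisymm hτ.2 hτ.1
        subst this; simp; exact hD.symm)) hstep
  intro s hs
  exact hmain hs s ⟨hs.1, le_rfl⟩

lemma flow_key (v : ℝ → V3 → V3)
    (hv : ContDiff ℝ 1 (fun p : ℝ × V3 => v p.1 p.2))
    (t₀ : ℝ) (α : ℝ → V3 → V3)
    (h0 : ∀ y, α t₀ y = y)
    (hder : ∀ t x, HasDerivAt (fun s => α s x) (v t (α t x)) t)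
    (x : V3) (a b : ℝ) (hat : a ≤ t₀) (htb : t₀ ≤ b) :
    ∃ δ > (0:ℝ), ∃ C > (0:ℝ), ∃ M > (0:ℝ),
      (∀ s ∈ Set.Icc a b, ∀ y ∈ Metric.closedBall x δ, ∀ z ∈ Metric.closedBall x δ,
        dist (α s y) (α s z) ≤ C * dist y z) ∧
      (∀ s ∈ Set.Icc a b, ∀ y ∈ Metric.closedBall x δ,
        ‖fderiv ℝ (v s) (α s y)‖ ≤ M) := by
  have hab : a ≤ b := hat.trans htb
  have htraj : ∀ y : V3, Continuous fun s => α s y := by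
    intro y
    have hd : Differentiable ℝ (fun s => α s y) := fun t => (hder t y).differentiableAt
    exact hd.continuous
  -- compact tube around the central trajectory
  have tubeK : IsCompact ((fun s => α s x) '' Set.Icc a b) :=
    isCompact_Icc.image (htraj x)
  obtain ⟨R, hR⟩ := tubeK.isBounded.subset_closedBall (0 : V3)
  set K' : Set V3 := Metric.closedBall (0 : V3) (max R 0 + 1) with hK'
  have hfK : ∀ s ∈ Set.Icc a b, Metric.closedBall (α s x) 1 ⊆ K' := by
    intro s hs p hp
    have h1 : α s x ∈ Metric.closedBall (0:V3) R := hR ⟨s, hs, rfl⟩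
    rw [Metric.mem_closedBall] at *
    calc dist p 0 ≤ dist p (α s x) + dist (α s x) 0 := dist_triangle _ _ _
      _ ≤ 1 + R := add_le_add hp h1
      _ ≤ max R 0 + 1 := by
          have := le_max_left R 0; linarith
  -- Lipschitz constant for v on [a,b] × K'
  set F : ℝ × V3 → V3 := fun p => v p.1 p.2 with hF
  have hFd : Differentiable ℝ F := hv.differentiable (by norm_num)
  have hfc : Continuous fun p => fderiv ℝ F p := hv.continuous_fderiv (by norm_num)
  have hPc : IsCompact (Set.Icc a b ×ˢ K') := isCompact_Icc.prod (isCompact_closedBall _ _)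
  obtain ⟨M₀, hM₀⟩ := hPc.exists_bound_of_continuousOn hfc.norm.continuousOn
  simp only [norm_norm] at hM₀
  set Mr : ℝ := max M₀ 0 + 1 with hMrdef
  have hMr : 0 < Mr := by positivity
  set Mn : ℝ≥0 := Real.toNNReal Mr with hMn
  have hMncoe : (Mn : ℝ) = Mr := Real.coe_toNNReal _ hMr.le
  have hFlip : LipschitzOnWith Mn F (Set.Icc a b ×ˢ K') := by
    apply Convex.lipschitzOnWith_of_nnnorm_fderiv_le
      (fun p _ => hFd p) ?_ ((convex_Icc a b).prod (convex_closedBall _ _))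
    intro p hp
    rw [← NNReal.coe_le_coe, coe_nnnorm, hMncoe]
    calc ‖fderiv ℝ F p‖ ≤ M₀ := hM₀ p hp
      _ ≤ Mr := by rw [hMrdef]; have := le_max_left M₀ 0; linarith
  have hvLip : ∀ s ∈ Set.Icc a b, LipschitzOnWith Mn (v s) K' := by
    intro s hs p hp q hq
    have := hFlip (x := (s, p)) (y := (s, q)) ⟨hs, hp⟩ ⟨hs, hq⟩
    simpa [F, Prod.edist_eq, edist_self] using this
  -- slice derivative and bound
  have hslice : ∀ s p, HasFDerivAt (v s)
      ((fderiv ℝ F (s, p)).comp (ContinuousLinearMap.inr ℝ ℝ V3)) p := by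
    intro s p
    exact ((hFd (s, p)).hasFDerivAt).comp p (hasFDerivAt_prodMk_right s p)
  have hinr : ‖ContinuousLinearMap.inr ℝ ℝ V3‖ ≤ 1 := by
    apply ContinuousLinearMap.opNorm_le_bound _ zero_le_one
    intro u
    simp [Prod.norm_def]
  have hvDb : ∀ s ∈ Set.Icc a b, ∀ p ∈ K', ‖fderiv ℝ (v s) p‖ ≤ Mr := by
    intro s hs p hp
    rw [(hslice s p).fderiv]
    calc ‖(fderiv ℝ F (s, p)).comp (ContinuousLinearMap.inr ℝ ℝ V3)‖
        ≤ ‖fderiv ℝ F (s, p)‖ * ‖ContinuousLinearMap.inr ℝ ℝ V3‖ :=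
          ContinuousLinearMap.opNorm_comp_le _ _
      _ ≤ M₀ * 1 := by
          apply mul_le_mul (hM₀ (s, p) ⟨hs, hp⟩) hinr (norm_nonneg _)
          exact le_trans (norm_nonneg _) (hM₀ (s, p) ⟨hs, hp⟩)
      _ ≤ Mr := by rw [hMrdef]; have := le_max_left M₀ 0; linarith
  -- choice of δ
  set δ : ℝ := Real.exp (-((Mn : ℝ) * (b - a))) / 4 with hδdef
  have hδ : 0 < δ := by positivity
  have hδsmall : ∀ r : ℝ, 0 ≤ r → r ≤ b - a → δ * Real.exp ((Mn:ℝ) * r) ≤ 1/4 := by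
    intro r hr hrba
    rw [hδdef, div_mul_eq_mul_div, div_le_div_iff₀ (by norm_num) (by norm_num)]
    rw [← Real.exp_add]
    have : -((Mn:ℝ) * (b - a)) + (Mn:ℝ) * r ≤ 0 := by
      have hM : (0:ℝ) ≤ Mn := Mn.coe_nonneg
      nlinarith
    have h5 : Real.exp (-((Mn:ℝ) * (b - a)) + (Mn:ℝ) * r) ≤ 1 := Real.exp_le_one_iff.2 this
    linarith
  -- the reversed field
  set w' : ℝ → V3 → V3 := fun u p => -(v (2 * t₀ - u) p) with hw'def
  have hw'lip : ∀ u ∈ Set.Icc t₀ (2 * t₀ - a), LipschitzOnWith Mn (w' u) K' := by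
    intro u hu p hp q hq
    have h2 : 2 * t₀ - u ∈ Set.Icc a b :=
      ⟨by have := hu.2; linarith, by have := hu.1; linarith⟩
    have := hvLip _ h2 hp hq
    simpa [w', edist_neg_neg] using this
  have hrevder : ∀ (y : V3), ∀ u : ℝ,
      HasDerivAt (fun u' => α (2 * t₀ - u') y) (w' u (α (2 * t₀ - u) y)) u := by
    intro y u
    have hin : HasDerivAt (fun u' : ℝ => 2 * t₀ - u') (-1) u := by
      simpa using (hasDerivAt_id u).const_sub (2 * t₀)
    have hout := hder (2 * t₀ - u) y
    have := HasDerivAt.scomp u hout hin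
    simpa [w', Function.comp_def] using this
  have ht2 : t₀ ≤ 2 * t₀ - a := by linarith
  have hrevcont : ∀ y : V3, Continuous fun u' : ℝ => α (2 * t₀ - u') y := fun y =>
    (htraj y).comp (continuous_const.sub continuous_id')
  -- central closeness estimate
  have hcenter : ∀ s ∈ Set.Icc a b, ∀ y ∈ Metric.closedBall x δ,
      dist (α s x) (α s y) ≤ 1/4 := by
    intro s hs y hy
    have hyd : dist x y ≤ δ := by rw [dist_comm]; exact hy
    have hsm : ∀ c' b' : ℝ, b' - c' ≤ b - a → 0 ≤ b' - c' →
        dist x y * Real.exp ((Mn:ℝ) * (b' - c')) ≤ 1/2 := by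
      intro c' b' h1 h2
      have := hδsmall _ h2 h1
      have h3 : dist x y * Real.exp ((Mn:ℝ) * (b' - c')) ≤ δ * Real.exp ((Mn:ℝ) * (b' - c')) :=
        mul_le_mul_of_nonneg_right hyd (Real.exp_pos _).le
      linarith
    rcases le_total t₀ s with hst | hst
    · have hb := boot (hcb := htb) v (fun τ hτ => hvLip τ ⟨hat.trans hτ.1, hτ.2⟩)
        (htraj x) (htraj y) (fun τ _ => hder τ x) (fun τ _ => hder τ y)
        (fun τ hτ => hfK τ ⟨hat.trans hτ.1, hτ.2⟩)
        (by rw [h0, h0]; exact hsm t₀ b (by linarith) (by linarith))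
      have := hb s ⟨hst, hs.2⟩
      rw [h0, h0] at this
      refine this.trans ?_
      have := hδsmall (s - t₀) (by linarith) (by have := hs.2; linarith)
      have h3 : dist x y * Real.exp ((Mn:ℝ) * (s - t₀)) ≤ δ * Real.exp ((Mn:ℝ) * (s - t₀)) :=
        mul_le_mul_of_nonneg_right hyd (Real.exp_pos _).le
      linarith
    · -- backward
      have hb := boot (hcb := ht2) w' hw'lip
        (hrevcont x) (hrevcont y)
        (fun τ _ => hrevder x τ) (fun τ _ => hrevder y τ)
        (fun τ hτ => hfK _ ⟨by have := hτ.2; linarith, by have := hτ.1; linarith⟩)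
        (by
          simp only [show (2:ℝ) * t₀ - t₀ = t₀ by ring, h0]
          exact hsm t₀ (2*t₀ - a) (by linarith) (by linarith))
      have hu : 2 * t₀ - s ∈ Set.Icc t₀ (2*t₀ - a) :=
        ⟨by linarith, by have := hs.1; linarith⟩
      have := hb _ hu
      simp only [show 2 * t₀ - (2 * t₀ - s) = s by ring, show 2 * t₀ - t₀ = t₀ by ring, h0] at this
      refine this.trans ?_
      have h4 := hδsmall (2*t₀ - s - t₀) (by linarith) (by have := hs.1; linarith)
      have h3 : dist x y * Real.exp ((Mn:ℝ) * (2*t₀ - s - t₀)) ≤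
          δ * Real.exp ((Mn:ℝ) * (2*t₀ - s - t₀)) :=
        mul_le_mul_of_nonneg_right hyd (Real.exp_pos _).le
      linarith
  have hmem : ∀ s ∈ Set.Icc a b, ∀ y ∈ Metric.closedBall x δ, α s y ∈ K' := by
    intro s hs y hy
    apply hfK s hs
    rw [Metric.mem_closedBall, dist_comm]
    exact (hcenter s hs y hy).trans (by norm_num)
  -- two-point estimate
  set C : ℝ := Real.exp ((Mn:ℝ) * (b - a)) with hCdef
  have hC : 0 < C := Real.exp_pos _
  have hexp_le : ∀ r : ℝ, r ≤ b - a → Real.exp ((Mn:ℝ) * r) ≤ C := by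
    intro r hr
    apply Real.exp_le_exp.2
    have hM : (0:ℝ) ≤ Mn := Mn.coe_nonneg
    nlinarith
  have htwo : ∀ s ∈ Set.Icc a b, ∀ y ∈ Metric.closedBall x δ, ∀ z ∈ Metric.closedBall x δ,
      dist (α s y) (α s z) ≤ C * dist y z := by
    intro s hs y hy z hz
    rcases le_total t₀ s with hst | hst
    · have hg := gron2 (K' := K') (M := Mn) (c := t₀) (b := b) v
        (fun τ hτ => hvLip τ ⟨hat.trans hτ.1, hτ.2⟩)
        (htraj y).continuousOn (htraj z).continuousOn
        (fun τ _ => (hder τ y).hasDerivWithinAt) (fun τ _ => (hder τ z).hasDerivWithinAt)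
        (fun τ hτ => hmem τ ⟨hat.trans hτ.1, hτ.2.le⟩ y hy)
        (fun τ hτ => hmem τ ⟨hat.trans hτ.1, hτ.2.le⟩ z hz)
      have := hg s ⟨hst, hs.2⟩
      rw [h0, h0] at this
      refine this.trans ?_
      exact mul_le_mul_of_nonneg_left (hexp_le _ (by have := hs.2; linarith)) dist_nonneg
        |>.trans (by rw [mul_comm])
    · have hg := gron2 (K' := K') (M := Mn) (c := t₀) (b := 2*t₀ - a) w' hw'lip
        (hrevcont y).continuousOn (hrevcont z).continuousOn
        (fun τ _ => (hrevder y τ).hasDerivWithinAt) (fun τ _ => (hrevder z τ).hasDerivWithinAt)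
        (fun τ hτ => hmem _ ⟨by have := hτ.2; linarith, by have := hτ.1; linarith⟩ y hy)
        (fun τ hτ => hmem _ ⟨by have := hτ.2; linarith, by have := hτ.1; linarith⟩ z hz)
      have hu : 2 * t₀ - s ∈ Set.Icc t₀ (2*t₀ - a) :=
        ⟨by linarith, by have := hs.1; linarith⟩
      have := hg _ hu
      simp only [show 2 * t₀ - (2 * t₀ - s) = s by ring, show 2 * t₀ - t₀ = t₀ by ring, h0] at this
      refine this.trans ?_
      exact mul_le_mul_of_nonneg_left (hexp_le _ (by have := hs.1; linarith)) dist_nonneg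
        |>.trans (by rw [mul_comm])
  exact ⟨δ, hδ, C, hC, Mr, hMr, htwo,
    fun s hs y hy => hvDb s hs (α s y) (hmem s hs y hy)⟩

/-- Measurability in time of the spatial derivative of the flow. -/
lemma meas_fderiv (α : ℝ → V3 → V3)
    (hcd : ∀ s : ℝ, Differentiable ℝ (α s))
    (htraj : ∀ y : V3, Continuous fun s => α s y)
    (x : V3) :
    Measurable fun s => fderiv ℝ (α s) x := by
  have key : ∀ u : V3, Measurable fun s => fderiv ℝ (α s) x u := by
    intro u
    apply measurable_of_tendsto_metrizable
      (f := fun (n : ℕ) (s : ℝ) => (n : ℝ) • (α s (x + ((n : ℝ))⁻¹ • u) - α s x))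
    · intro n
      exact (((htraj _).sub (htraj x)).const_smul (n : ℝ)).measurable
    · rw [tendsto_pi_nhds]
      intro s
      apply HasFDerivAt.lim ((hcd s x).hasFDerivAt) u (c := fun n : ℕ => (n : ℝ))
      have : Filter.Tendsto (fun n : ℕ => (n:ℝ)) Filter.atTop Filter.atTop :=
        tendsto_natCast_atTop_atTop
      exact Filter.Tendsto.congr (fun n => (Real.norm_natCast n).symm) this
  -- reconstruct the CLM from matrix entries
  set φ : (Fin 3 → Fin 3 → ℝ) → (V3 →L[ℝ] V3) :=
    fun m => LinearMap.toContinuousLinearMap (Matrix.toLin' (Matrix.of m)) with hφ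
  have hφcont : Continuous φ := by
    have : IsLinearMap ℝ φ := by
      constructor
      · intro m₁ m₂
        show LinearMap.toContinuousLinearMap (Matrix.toLin' (Matrix.of m₁ + Matrix.of m₂)) = _
        rw [map_add, map_add]
      · intro c m
        show LinearMap.toContinuousLinearMap (Matrix.toLin' (c • Matrix.of m)) = _
        rw [_root_.map_smul, _root_.map_smul]
    exact (this.mk' φ).continuous_of_finiteDimensional
  set ent : ℝ → Fin 3 → Fin 3 → ℝ := fun s i j => fderiv ℝ (α s) x (Pi.single j 1) i with hent
  have hM : Measurable ent := by
    apply measurable_pi_lambda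
    intro i
    apply measurable_pi_lambda
    intro j
    exact (key (Pi.single j 1)).eval
  have harg : ∀ j : Fin 3, (fun k => if k = j then (1:ℝ) else 0) = (Pi.single j 1 : V3) := by
    intro j; funext k; simp [Pi.single_apply]
  have hmx : ∀ s : ℝ, Matrix.of (ent s) = LinearMap.toMatrix' (fderiv ℝ (α s) x : V3 →ₗ[ℝ] V3) := by
    intro s
    ext i j
    simp only [LinearMap.toMatrix'_apply, Matrix.of_apply, hent,
      ContinuousLinearMap.coe_coe, harg j]
  have heq : (fun s => fderiv ℝ (α s) x) = fun s => φ (ent s) := by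
    funext s
    show _ = LinearMap.toContinuousLinearMap (Matrix.toLin' (Matrix.of (ent s)))
    rw [hmx s]
    apply ContinuousLinearMap.coe_injective
    simp [hφ, Matrix.toLin'_toMatrix']
  rw [heq]
  exact hφcont.measurable.comp hM

lemma flow_A (v : ℝ → V3 → V3)
    (hv : ContDiff ℝ 1 (fun p : ℝ × V3 => v p.1 p.2))
    (t₀ : ℝ) (α : ℝ → V3 → V3)
    (h0 : ∀ y, α t₀ y = y)
    (hcd : ∀ s : ℝ, ContDiff ℝ 1 (α s))
    (hder : ∀ t x, HasDerivAt (fun s => α s x) (v t (α t x)) t)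
    (x : V3) :
    (Continuous fun s => fderiv ℝ (α s) x) ∧
    ∀ t, HasDerivAt (fun s => fderiv ℝ (α s) x)
      ((fderiv ℝ (v t) (α t x)).comp (fderiv ℝ (α t) x)) t := by
  set F : ℝ × V3 → V3 := fun p => v p.1 p.2 with hF
  have hFd : Differentiable ℝ F := hv.differentiable (by norm_num)
  have hvc : Continuous F := hv.continuous
  have hdiff : ∀ s : ℝ, Differentiable ℝ (α s) := fun s => (hcd s).differentiable (by norm_num)
  have htraj : ∀ y : V3, Continuous fun s => α s y := by
    intro y
    have hd : Differentiable ℝ (fun s => α s y) := fun t => (hder t y).differentiableAt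
    exact hd.continuous
  set Bd : ℝ → V3 → (V3 →L[ℝ] V3) :=
    fun s p => (fderiv ℝ F (s, p)).comp (ContinuousLinearMap.inr ℝ ℝ V3) with hBd
  have hslice : ∀ s p, HasFDerivAt (v s) (Bd s p) p := fun s p =>
    ((hFd (s, p)).hasFDerivAt).comp p (hasFDerivAt_prodMk_right s p)
  have hfc : Continuous fun p => fderiv ℝ F p := hv.continuous_fderiv (by norm_num)
  have hcontB : Continuous fun s => Bd s (α s x) :=
    Continuous.clm_comp (hfc.comp (continuous_id.prodMk (htraj x))) continuous_const
  set A : ℝ → (V3 →L[ℝ] V3) := fun s => fderiv ℝ (α s) x with hA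
  set g : ℝ → (V3 →L[ℝ] V3) := fun s => (Bd s (α s x)).comp (A s) with hg
  have hmeasA : Measurable A := meas_fderiv α hdiff htraj x
  have hmeasg : Measurable g := by
    have hpair : Measurable fun s => (Bd s (α s x), A s) :=
      hcontB.measurable.prodMk hmeasA
    exact (isBoundedBilinearMap_comp.continuous.measurable).comp hpair
  -- uniform bounds on compact intervals
  have hbound : ∀ a b : ℝ, a ≤ t₀ → t₀ ≤ b → ∃ Q ≥ (0:ℝ), ∀ s ∈ Set.Icc a b, ‖g s‖ ≤ Q := by
    intro a b hat htb
    obtain ⟨δ, hδ, C, hC, M, hM, htwo, hMb⟩ := flow_key v hv t₀ α h0 hder x a b hat htb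
    refine ⟨M * C, by positivity, ?_⟩
    intro s hs
    have hxmem : x ∈ Metric.closedBall x δ := Metric.mem_closedBall_self hδ.le
    have hlip : LipschitzOnWith (Real.toNNReal C) (α s) (Metric.closedBall x δ) := by
      apply LipschitzOnWith.of_dist_le_mul
      intro p hp q hq
      rw [Real.coe_toNNReal _ hC.le]
      exact htwo s hs p hp q hq
    have hAb : ‖A s‖ ≤ C := by
      have := HasFDerivAt.le_of_lipschitzOn ((hdiff s x).hasFDerivAt)
        (Metric.closedBall_mem_nhds x hδ) hlip
      rwa [Real.coe_toNNReal _ hC.le] at this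
    have hBb : ‖Bd s (α s x)‖ ≤ M := by
      rw [← (hslice s (α s x)).fderiv]
      exact hMb s hs x hxmem
    calc ‖(Bd s (α s x)).comp (A s)‖ ≤ ‖Bd s (α s x)‖ * ‖A s‖ :=
          ContinuousLinearMap.opNorm_comp_le _ _
      _ ≤ M * C := mul_le_mul hBb hAb (norm_nonneg _) hM.le
  have hloc : ∀ c d : ℝ, IntervalIntegrable g volume c d := by
    intro c d
    obtain ⟨Q, hQ0, hQ⟩ := hbound (min (min c d) t₀) (max (max c d) t₀)
      (le_trans (min_le_right _ _) le_rfl) (le_max_right _ _)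
    rw [intervalIntegrable_iff]
    have hconst : IntegrableOn (fun _ : ℝ => Q) (Set.uIoc c d) volume :=
      integrableOn_const measure_Ioc_lt_top.ne
    apply Integrable.mono' hconst
    · exact hmeasg.aestronglyMeasurable.restrict
    · apply ae_restrict_of_forall_mem measurableSet_uIoc
      intro s hs
      apply hQ
      constructor
      · exact le_trans (min_le_left _ _) hs.1.le
      · exact hs.2.trans (le_max_left _ _)
  -- the integral equation
  have hInt : ∀ t : ℝ, A t = ContinuousLinearMap.id ℝ V3 + ∫ s in t₀..t, g s := by
    intro t
    obtain ⟨δ, hδ, C, hC, M, hM, htwo, hMb⟩ := flow_key v hv t₀ α h0 hder x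
      (min t t₀) (max t t₀) (min_le_right _ _) (le_max_right _ _)
    have huIcc : Set.uIoc t₀ t ⊆ Set.Icc (min t t₀) (max t t₀) := by
      rw [Set.uIoc]
      intro s hs
      constructor
      · exact (min_comm t₀ t ▸ hs.1.le : min t t₀ ≤ s)
      · exact hs.2.trans (le_of_eq (max_comm t₀ t))
    have hFDint := intervalIntegral.hasFDerivAt_integral_of_dominated_of_fderiv_le
      (𝕜 := ℝ) (μ := volume) (F := fun (y : V3) (s : ℝ) => v s (α s y))
      (F' := fun (y : V3) (s : ℝ) => (Bd s (α s y)).comp (fderiv ℝ (α s) y))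
      (x₀ := x) (a := t₀) (b := t) (bound := fun _ => M * C) (Metric.ball_mem_nhds x hδ)
      (Filter.Eventually.of_forall (fun y =>
        ((hvc.comp (continuous_id.prodMk (htraj y))).aestronglyMeasurable.restrict)))
      ((hvc.comp (continuous_id.prodMk (htraj x))).intervalIntegrable _ _)
      (hmeasg.aestronglyMeasurable.restrict)
      (Filter.Eventually.of_forall (fun s hs y hy => ?_))
      (intervalIntegrable_const)
      (Filter.Eventually.of_forall (fun s hs y hy =>
        ((hslice s (α s y)).comp y ((hdiff s y).hasFDerivAt))))
    · have hIE : (fun y : V3 => ∫ s in t₀..t, v s (α s y)) = fun y => α t y - y := by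
        funext y
        have := intervalIntegral.integral_eq_sub_of_hasDerivAt
          (a := t₀) (b := t)
          (f := fun s => α s y) (f' := fun s => v s (α s y))
          (fun s _ => hder s y)
          (((hvc.comp (continuous_id.prodMk (htraj y)))).intervalIntegrable _ _)
        rw [this]
        simp only [h0 y]
      rw [hIE] at hFDint
      have hG2 : HasFDerivAt (fun y => α t y - y) (A t - ContinuousLinearMap.id ℝ V3) x :=
        ((hdiff t x).hasFDerivAt).sub (hasFDerivAt_id x)
      have := hG2.unique hFDint
      rw [sub_eq_iff_eq_add] at this
      rw [this, add_comm]
    · -- the bound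
      have hsmem : s ∈ Set.Icc (min t t₀) (max t t₀) := huIcc hs
      have hyc : y ∈ Metric.closedBall x δ := Metric.ball_subset_closedBall hy
      have hlip : LipschitzOnWith (Real.toNNReal C) (α s) (Metric.closedBall x δ) := by
        apply LipschitzOnWith.of_dist_le_mul
        intro p hp q hq
        rw [Real.coe_toNNReal _ hC.le]
        exact htwo s hsmem p hp q hq
      have hAb : ‖fderiv ℝ (α s) y‖ ≤ C := by
        have := HasFDerivAt.le_of_lipschitzOn ((hdiff s y).hasFDerivAt)
          (Filter.mem_of_superset (Metric.isOpen_ball.mem_nhds hy) Metric.ball_subset_closedBall)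
          hlip
        rwa [Real.coe_toNNReal _ hC.le] at this
      have hBb : ‖Bd s (α s y)‖ ≤ M := by
        rw [← (hslice s (α s y)).fderiv]
        exact hMb s hsmem y hyc
      calc ‖(Bd s (α s y)).comp (fderiv ℝ (α s) y)‖
          ≤ ‖Bd s (α s y)‖ * ‖fderiv ℝ (α s) y‖ := ContinuousLinearMap.opNorm_comp_le _ _
        _ ≤ M * C := mul_le_mul hBb hAb (norm_nonneg _) hM.le
  -- continuity of A
  have hAc : Continuous A := by
    have h1 : Continuous fun t => (∫ s in t₀..t, g s) :=
      intervalIntegral.continuous_primitive hloc t₀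
    have h2 : Continuous fun t => ContinuousLinearMap.id ℝ V3 + ∫ s in t₀..t, g s :=
      continuous_const.add h1
    have : A = fun t => ContinuousLinearMap.id ℝ V3 + ∫ s in t₀..t, g s := funext hInt
    rw [this]; exact h2
  have hgc : Continuous g := Continuous.clm_comp hcontB hAc
  refine ⟨hAc, ?_⟩
  intro t
  have hprim : HasDerivAt (fun u => ∫ s in t₀..u, g s) (g t) t :=
    intervalIntegral.integral_hasDerivAt_right (hloc t₀ t)
      (hgc.stronglyMeasurable.stronglyMeasurableAtFilter) hgc.continuousAt
  have hA' : HasDerivAt A (g t) t := by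
    have h3 : HasDerivAt (fun u => ContinuousLinearMap.id ℝ V3 + ∫ s in t₀..u, g s) (g t) t :=
      hprim.const_add _
    have : A = fun u => ContinuousLinearMap.id ℝ V3 + ∫ s in t₀..u, g s := funext hInt
    rw [this]; exact h3
  have : g t = (fderiv ℝ (v t) (α t x)).comp (fderiv ℝ (α t) x) := by
    rw [hg, (hslice t (α t x)).fderiv]
  rwa [this] at hA'

lemma hasDerivAt_det3 {m : ℝ → Matrix (Fin 3) (Fin 3) ℝ} {B : Matrix (Fin 3) (Fin 3) ℝ} {t : ℝ}
    (h : ∀ i j, HasDerivAt (fun s => m s i j) ((B * m t) i j) t) :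
    HasDerivAt (fun s => (m s).det) (B.trace * (m t).det) t := by
  have hdet : (fun s => (m s).det) = fun s =>
      m s 0 0 * m s 1 1 * m s 2 2 - m s 0 0 * m s 1 2 * m s 2 1 -
      m s 0 1 * m s 1 0 * m s 2 2 + m s 0 1 * m s 1 2 * m s 2 0 +
      m s 0 2 * m s 1 0 * m s 2 1 - m s 0 2 * m s 1 1 * m s 2 0 := by
    funext s; exact Matrix.det_fin_three (m s)
  rw [hdet]
  have H := ((((((h 0 0).mul (h 1 1)).mul (h 2 2)).sub
    (((h 0 0).mul (h 1 2)).mul (h 2 1))).sub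
    (((h 0 1).mul (h 1 0)).mul (h 2 2))).add
    (((h 0 1).mul (h 1 2)).mul (h 2 0))).add
    (((h 0 2).mul (h 1 0)).mul (h 2 1)) |>.sub
    (((h 0 2).mul (h 1 1)).mul (h 2 0))
  convert H using 1
  all_goals try rfl
  simp only [Matrix.trace_fin_three, Matrix.det_fin_three, Matrix.mul_apply,
    Fin.sum_univ_three, Pi.mul_apply]
  ring

/-- If `ρ` is C¹ and satisfies the continuity equation
`∂ₜ ρ + v^a ∂_a ρ = −ρ ∂_a v^a`, then for every bounded open set `G` the total
mass `t ↦ ∫_{G_t} ρ(t,x) d³x` over the comoving domain `G_t = α(t,G)` is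
constant in `t`. -/
theorem mass_conservation (v : ℝ → V3 → V3)
    (hv : ContDiff ℝ 1 (fun p : ℝ × V3 => v p.1 p.2))
    (t₀ : ℝ) (α : ℝ → V3 → V3) (hα : IsFlowMap v t₀ α)
    (ρ : ℝ → V3 → ℝ) (hρ : ContDiff ℝ 1 (fun p : ℝ × V3 => ρ p.1 p.2))
    (hcont : ∀ t x, deriv (fun s => ρ s x) t + ∑ b, v t x b * pd (ρ t) b x
      = - ρ t x * ∑ a, pd (fun y => v t y a) a x)
    (G : Set V3) (hGo : IsOpen G) (hGb : Bornology.IsBounded G)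
    (hGpos : 0 < volume G) (hGfin : volume G < ⊤) :
    ∀ t₁ t₂, (∫ x in α t₁ '' G, ρ t₁ x) = ∫ x in α t₂ '' G, ρ t₂ x := by
  obtain ⟨h0, hprop, hder⟩ := hα
  have hbij : ∀ t, Function.Bijective (α t) := fun t => (hprop t).1
  have hcd : ∀ t, ContDiff ℝ 1 (α t) := fun t => (hprop t).2.1
  have hcdinv : ∀ t, ContDiff ℝ 1 (Function.invFun (α t)) := fun t => (hprop t).2.2
  have hdiff : ∀ t, Differentiable ℝ (α t) := fun t => (hcd t).differentiable (by norm_num)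
  set F : ℝ × V3 → V3 := fun p => v p.1 p.2 with hF
  set Fρ : ℝ × V3 → ℝ := fun p => ρ p.1 p.2 with hFρ
  have hFd : Differentiable ℝ F := hv.differentiable (by norm_num)
  have hFρd : Differentiable ℝ Fρ := hρ.differentiable (by norm_num)
  have hsliceV : ∀ (s : ℝ) (p : V3), HasFDerivAt (v s)
      ((fderiv ℝ F (s, p)).comp (ContinuousLinearMap.inr ℝ ℝ V3)) p := fun s p =>
    ((hFd (s, p)).hasFDerivAt).comp p (hasFDerivAt_prodMk_right s p)
  have hsliceρ : ∀ (s : ℝ) (p : V3), HasFDerivAt (ρ s)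
      ((fderiv ℝ Fρ (s, p)).comp (ContinuousLinearMap.inr ℝ ℝ V3)) p := fun s p =>
    ((hFρd (s, p)).hasFDerivAt).comp p (hasFDerivAt_prodMk_right s p)
  have hρt : ∀ (t : ℝ) (p : V3), HasDerivAt (fun s => ρ s p)
      ((fderiv ℝ Fρ (t, p)) (1, 0)) t := fun t p =>
    HasFDerivAt.comp_hasDerivAt (l := Fρ) t ((hFρd (t, p)).hasFDerivAt) ((hasDerivAt_id' t).prodMk (hasDerivAt_const t p))
  -- basis expansion of a scalar-valued CLM
  have hLsum : ∀ (L : V3 →L[ℝ] ℝ) (w : V3), ∑ b, w b * L (Pi.single b 1) = L w := by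
    intro L w
    have hw : ∑ b, Pi.single b (w b) = w := Finset.univ_sum_single w
    calc ∑ b, w b * L (Pi.single b 1) = ∑ b, L (Pi.single b (w b)) := by
          apply Finset.sum_congr rfl
          intro b _
          rw [← smul_eq_mul, ← L.map_smul]
          congr 1
          funext k
          simp [Pi.single_apply, mul_ite]
      _ = L w := by rw [← map_sum, hw]
  -- matrix entries of a CLM
  have harg : ∀ j : Fin 3, (fun k => if k = j then (1:ℝ) else 0) = (Pi.single j 1 : V3) := by
    intro j; funext k; simp [Pi.single_apply]
  have hEntry : ∀ (h : V3 →L[ℝ] V3) (i j : Fin 3),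
      LinearMap.toMatrix' (↑h : V3 →ₗ[ℝ] V3) i j = h (Pi.single j 1) i := by
    intro h i j
    simp only [LinearMap.toMatrix'_apply, ContinuousLinearMap.coe_coe, harg j]
  -- the key pointwise conservation identity
  have key : ∀ (x : V3) (t : ℝ), 0 < (fderiv ℝ (α t) x).det ∧
      ρ t (α t x) * (fderiv ℝ (α t) x).det = ρ t₀ x := by
    intro x
    obtain ⟨hAc, hA'⟩ := flow_A v hv t₀ α h0 hcd hder x
    set A : ℝ → (V3 →L[ℝ] V3) := fun s => fderiv ℝ (α s) x with hA
    set m : ℝ → Matrix (Fin 3) (Fin 3) ℝ :=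
      fun s => LinearMap.toMatrix' (↑(A s) : V3 →ₗ[ℝ] V3) with hm
    set J : ℝ → ℝ := fun s => (m s).det with hJ
    have hdetJ : ∀ s, (fderiv ℝ (α s) x).det = J s := fun s =>
      (LinearMap.det_toMatrix' _).symm
    -- derivative of J
    have hJ' : ∀ t, HasDerivAt J
        ((LinearMap.toMatrix' (↑(fderiv ℝ (v t) (α t x)) : V3 →ₗ[ℝ] V3)).trace * J t) t := by
      intro t
      set Dv := fderiv ℝ (v t) (α t x) with hDv
      set Bm := LinearMap.toMatrix' (↑Dv : V3 →ₗ[ℝ] V3) with hBm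
      have hmij : ∀ i j, HasDerivAt (fun s => m s i j) ((Bm * m t) i j) t := by
        intro i j
        have hApp : HasDerivAt (fun s => A s (Pi.single j 1))
            ((Dv.comp (A t)) (Pi.single j 1)) t := by
          have := (hA' t).clm_apply (hasDerivAt_const t (Pi.single j 1))
          simpa using this
        have hCoord := (ContinuousLinearMap.proj (R := ℝ) (φ := fun _ : Fin 3 => ℝ)
          i).hasFDerivAt.comp_hasDerivAt t hApp
        have hfun : (fun s => m s i j) = fun s => (A s (Pi.single j 1)) i := by
          funext s; exact hEntry (A s) i j
        have hval : (Bm * m t) i j = ((Dv.comp (A t)) (Pi.single j 1)) i := by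
          rw [hBm, hm, ← LinearMap.toMatrix'_comp, ← ContinuousLinearMap.toLinearMap_comp,
            hEntry]
        rw [hfun, hval]
        exact hCoord
      exact hasDerivAt_det3 hmij
    -- J is never zero
    have hJne : ∀ t, J t ≠ 0 := by
      intro t
      rw [← hdetJ t]
      have hli : Function.LeftInverse (Function.invFun (α t)) (α t) :=
        Function.leftInverse_invFun (hbij t).1
      have hcomp : HasFDerivAt (fun y => Function.invFun (α t) (α t y))
          ((fderiv ℝ (Function.invFun (α t)) (α t x)).comp (A t)) x :=
        (((hcdinv t).differentiable (by norm_num)) (α t x)).hasFDerivAt.comp x ((hdiff t) x).hasFDerivAt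
      have hid : (fun y => Function.invFun (α t) (α t y)) = fun y => y := funext hli
      rw [hid] at hcomp
      have heq := hcomp.unique (hasFDerivAt_id x)
      have hdets : (fderiv ℝ (Function.invFun (α t)) (α t x)).det * (A t).det = 1 := by
        have hdet := congrArg ContinuousLinearMap.det heq
        rwa [ContinuousLinearMap.det, ContinuousLinearMap.toLinearMap_comp, LinearMap.det_comp,
          ContinuousLinearMap.det, ContinuousLinearMap.coe_id, LinearMap.det_id] at hdet
      intro h
      rw [show (fderiv ℝ (α t) x).det = (A t).det from rfl] at h
      rw [h, mul_zero] at hdets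
      exact zero_ne_one hdets
    -- J t₀ = 1
    have hJt0 : J t₀ = 1 := by
      rw [← hdetJ t₀]
      have hidα : α t₀ = fun y => y := funext h0
      rw [hidα]
      rw [fderiv_id']
      rw [ContinuousLinearMap.det, ContinuousLinearMap.coe_id, LinearMap.det_id]
    -- J is continuous
    have hJc : Continuous J := by
      have hmc : Continuous m := by
        apply continuous_matrix
        intro i j
        have : (fun s => m s i j) = fun s => (A s (Pi.single j 1)) i := by
          funext s; exact hEntry (A s) i j
        rw [this]
        exact (continuous_apply i).comp (hAc.clm_apply continuous_const)
      exact hmc.matrix_det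
    -- J is positive
    have hJpos : ∀ t, 0 < J t := by
      intro t
      by_contra hle
      push_neg at hle
      have hlt : J t < 0 := lt_of_le_of_ne hle (hJne t)
      have h0uIcc : (0:ℝ) ∈ Set.uIcc (J t) (J t₀) := by
        rw [Set.mem_uIcc]
        left; exact ⟨hlt.le, by rw [hJt0]; norm_num⟩
      obtain ⟨s, _, hs⟩ := intermediate_value_uIcc hJc.continuousOn h0uIcc
      exact hJne s hs
    -- zero derivative of the mass density along trajectories
    have hzero : ∀ u : ℝ, HasDerivAt (fun s => ρ s (α s x) * J s) 0 u := by
      intro t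
      set p : V3 := α t x with hp
      set w : V3 := v t p with hw
      set Dρp := fderiv ℝ Fρ (t, p) with hDρp
      have hgd : HasDerivAt (fun s => ρ s (α s x)) (Dρp (1, w)) t := by
        have hcurve : HasDerivAt (fun s => ((s, α s x) : ℝ × V3)) (1, w) t :=
          (hasDerivAt_id' t).prodMk (hder t x)
        exact ((hFρd (t, p)).hasFDerivAt).comp_hasDerivAt t hcurve
      have hceq : Dρp (1, w) = - ρ t p *
          (LinearMap.toMatrix' (↑(fderiv ℝ (v t) p) : V3 →ₗ[ℝ] V3)).trace := by
        have hc := hcont t p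
        rw [(hρt t p).deriv] at hc
        have hsp : ∑ b, v t p b * pd (ρ t) b p
            = ((fderiv ℝ Fρ (t, p)).comp (ContinuousLinearMap.inr ℝ ℝ V3)) w := by
          have : ∀ b, pd (ρ t) b p = (fderiv ℝ (ρ t) p) (Pi.single b 1) := fun b => rfl
          simp only [this, (hsliceρ t p).fderiv]
          exact hLsum _ w
        rw [hsp] at hc
        have hdvsum : ∑ a, pd (fun y => v t y a) a p
            = (LinearMap.toMatrix' (↑(fderiv ℝ (v t) p) : V3 →ₗ[ℝ] V3)).trace := by
          have hco : ∀ a : Fin 3, pd (fun y => v t y a) a p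
              = (fderiv ℝ (v t) p (Pi.single a 1)) a := by
            intro a
            have h1 : HasFDerivAt (v t) (fderiv ℝ (v t) p) p :=
              (hsliceV t p).differentiableAt.hasFDerivAt
            have hca := (ContinuousLinearMap.proj (R := ℝ) (φ := fun _ : Fin 3 => ℝ)
              a).hasFDerivAt.comp p h1
            have hca2 : HasFDerivAt (fun y => v t y a)
                ((ContinuousLinearMap.proj (R := ℝ) (φ := fun _ : Fin 3 => ℝ) a).comp
                  (fderiv ℝ (v t) p)) p := hca
            rw [pd, hca2.fderiv]
            rfl
          rw [Matrix.trace]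
          simp only [Matrix.diag, hEntry]
          exact Finset.sum_congr rfl fun a _ => hco a
        rw [hdvsum] at hc
        have hsplit : Dρp (1, w) = Dρp (1, 0) + Dρp (0, w) := by
          rw [← map_add]
          congr 1
          simp
        rw [hsplit]
        have hinr : (ContinuousLinearMap.inr ℝ ℝ V3) w = ((0 : ℝ), w) := rfl
        rw [ContinuousLinearMap.comp_apply, hinr] at hc
        linarith [hc]
      have hmul := hgd.mul (hJ' t)
      convert hmul using 1
      all_goals try rfl
      rw [hceq]
      have : α t x = p := rfl
      rw [this]
      ring
    -- the product is constant
    have hconst : ∀ t : ℝ, ρ t (α t x) * J t = ρ t₀ x := by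
      have hcf := is_const_of_deriv_eq_zero (f := fun s => ρ s (α s x) * J s)
        (fun u => (hzero u).differentiableAt) (fun u => (hzero u).deriv)
      intro t
      have h2 : ρ t (α t x) * J t = ρ t₀ (α t₀ x) * J t₀ := hcf t t₀
      rw [hJt0, h0 x, mul_one] at h2
      exact h2
    intro t
    rw [hdetJ t]
    exact ⟨hJpos t, hconst t⟩
  -- change of variables
  have hCV : ∀ t : ℝ, (∫ y in α t '' G, ρ t y) = ∫ x in G, ρ t₀ x := by
    intro t
    have h1 : (∫ y in α t '' G, ρ t y)
        = ∫ x in G, |(fderiv ℝ (α t) x).det| • ρ t (α t x) :=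
      integral_image_eq_integral_abs_det_fderiv_smul volume hGo.measurableSet
        (fun x _ => ((hdiff t) x).hasFDerivAt.hasFDerivWithinAt)
        (Set.injOn_of_injective (hbij t).1) (ρ t)
    rw [h1]
    have h2 : (fun x => |(fderiv ℝ (α t) x).det| • ρ t (α t x)) = fun x => ρ t₀ x := by
      funext x
      obtain ⟨hpos, hmass⟩ := key x t
      rw [abs_of_pos hpos, smul_eq_mul, mul_comm]
      exact hmass
    rw [h2]
  intro t₁ t₂
  rw [hCV t₁, hCV t₂]
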